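/- Let A be an M×N real matrix with every row and every column nonzero, with rows a¹, ..., a^M. Let W be the M×M diagonal matrix with i-th diagonal entry 1/‖aⁱ‖², and let D be the N×N diagonal matrix with j-th diagonal entry 1/s_j, where s_j is the number of nonzero entries in the j-th column of A. Then the spectral radius of D·Aᵀ·W·A is at most 1. -/

import Mathlib

/-- Lemma 2.2 of the DROP paper, as used in the text. Let `A` be an
`M × N` real matrix with every row and every column nonzero, `W` the diagonal matrix with
`i`-th diagonal entry `1/‖aⁱ‖²` (inverse squared Euclidean norm of the `i`-th row), and
`D` the diagonal matrix with `j`-th entry `1/s j`, where `s j` is the number of nonzero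
entries in the `j`-th column of `A`. Then the spectral radius of `D·Aᵀ·W·A` is at most
`1`: every complex eigenvalue `μ` of it satisfies `|μ| ≤ 1`. -/
theorem drop_spectral_radius_le_one
    (M N : ℕ) (A : Matrix (Fin M) (Fin N) ℝ)
    (hrows : ∀ i, (fun j => A i j) ≠ 0)
    (hcols : ∀ j, ∃ i, A i j ≠ 0) :
    ∀ (μ : ℂ) (v : Fin N → ℂ), v ≠ 0 →
      ((Matrix.diagonal (fun j : Fin N => 1 / (Set.ncard {i : Fin M | A i j ≠ 0} : ℝ)) *
          A.transpose *
          Matrix.diagonal (fun i : Fin M => 1 / ∑ j, (A i j) ^ 2) *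
          A).map (fun t : ℝ => (t : ℂ))).mulVec v = μ • v →
      ‖μ‖ ≤ 1 := by
  intro μ v hv h
  -- notation
  set s : Fin N → ℝ := fun j => (Set.ncard {i : Fin M | A i j ≠ 0} : ℝ) with hs
  set R : Fin M → ℝ := fun i => ∑ j, (A i j) ^ 2 with hR
  have hRpos : ∀ i, 0 < R i := by
    intro i
    obtain ⟨j, hj⟩ : ∃ j, A i j ≠ 0 := by
      by_contra hc
      push_neg at hc
      exact hrows i (funext fun j => hc j)
    exact Finset.sum_pos' (fun k _ => sq_nonneg _)
      ⟨j, Finset.mem_univ j, by positivity⟩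
  have hscard : ∀ j, s j = ((Finset.univ.filter (fun i => A i j ≠ 0)).card : ℝ) := by
    intro j
    have : {i : Fin M | A i j ≠ 0}.ncard
        = (Finset.univ.filter (fun i => A i j ≠ 0)).card := by
      rw [Set.ncard_eq_toFinset_card']
      congr 1
      ext i
      simp
    rw [hs]; norm_num [this]
  have hs1 : ∀ j, 1 ≤ s j := by
    intro j
    rw [hscard]
    have : (Finset.univ.filter (fun i => A i j ≠ 0)).Nonempty := by
      obtain ⟨i, hi⟩ := hcols j
      exact ⟨i, by simp [hi]⟩
    exact_mod_cast Finset.card_pos.mpr this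
  -- the vector u = A v over ℂ
  set u : Fin M → ℂ := fun i => ∑ j, (A i j : ℂ) * v j with hu
  -- entrywise eigen equation
  have hentry : ∀ j, ((1 / s j : ℝ) : ℂ) * ∑ i, (A i j : ℂ) * ((1 / R i : ℝ) : ℂ) * u i
      = μ * v j := by
    intro j
    have h1 := congrFun h j
    have hM : ∀ j' : Fin N,
        (Matrix.diagonal (fun j : Fin N => 1 / (Set.ncard {i : Fin M | A i j ≠ 0} : ℝ)) *
          A.transpose * Matrix.diagonal (fun i : Fin M => 1 / ∑ j, (A i j) ^ 2) * A) j j'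
        = (1 / s j) * ∑ i, A i j * (1 / R i) * A i j' := by
      intro j'
      rw [hs, hR]
      simp [Matrix.mul_apply, Matrix.diagonal_apply, ite_mul, mul_ite, mul_zero,
        zero_mul, Finset.sum_ite_eq, Finset.sum_ite_eq', Finset.mul_sum, mul_assoc]
    rw [show μ * v j = (μ • v) j from rfl, ← h1]
    simp only [Matrix.mulVec, Matrix.map_apply, hM]
    push_cast
    simp only [dotProduct, Finset.mul_sum, mul_assoc]
    simp only [← Finset.mul_sum]
    simp only [Finset.mul_sum, Finset.sum_mul]
    rw [Finset.sum_comm]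
    refine Finset.sum_congr rfl fun i _ => ?_
    rw [hu]
    simp only [Finset.mul_sum]
    exact Finset.sum_congr rfl fun j' _ => by ring
  -- quadratic-form quantities
  set Den : ℝ := ∑ j, s j * Complex.normSq (v j) with hDen
  set Num : ℝ := ∑ i, (1 / R i) * Complex.normSq (u i) with hNum
  have hsne : ∀ j, (s j : ℂ) ≠ 0 := fun j => by
    exact_mod_cast ne_of_gt (lt_of_lt_of_le zero_lt_one (hs1 j))
  have hkey : μ * (Den : ℂ) = (Num : ℂ) := by
    have h2 : ∑ j, (s j : ℂ) * (starRingEnd ℂ (v j)) * (μ * v j)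
        = ∑ j, (s j : ℂ) * (starRingEnd ℂ (v j)) *
            (((1 / s j : ℝ) : ℂ) * ∑ i, (A i j : ℂ) * ((1 / R i : ℝ) : ℂ) * u i) :=
      Finset.sum_congr rfl fun j _ => by rw [hentry j]
    have hL : ∑ j, (s j : ℂ) * (starRingEnd ℂ (v j)) * (μ * v j) = μ * (Den : ℂ) := by
      rw [hDen]
      push_cast
      rw [Finset.mul_sum]
      refine Finset.sum_congr rfl fun j _ => ?_
      rw [← Complex.mul_conj]
      ring
    have hRs : ∑ j, (s j : ℂ) * (starRingEnd ℂ (v j)) *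
            (((1 / s j : ℝ) : ℂ) * ∑ i, (A i j : ℂ) * ((1 / R i : ℝ) : ℂ) * u i)
        = (Num : ℂ) := by
      have step1 : ∀ j, (s j : ℂ) * (starRingEnd ℂ (v j)) *
            (((1 / s j : ℝ) : ℂ) * ∑ i, (A i j : ℂ) * ((1 / R i : ℝ) : ℂ) * u i)
          = ∑ i, (starRingEnd ℂ (v j)) * ((A i j : ℂ) * ((1 / R i : ℝ) : ℂ) * u i) := by
        intro j
        have hcancel : (s j : ℂ) * ((1 / s j : ℝ) : ℂ) = 1 := by
          push_cast
          rw [mul_one_div, div_self (hsne j)]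
        calc (s j : ℂ) * (starRingEnd ℂ (v j)) *
              (((1 / s j : ℝ) : ℂ) * ∑ i, (A i j : ℂ) * ((1 / R i : ℝ) : ℂ) * u i)
            = ((s j : ℂ) * ((1 / s j : ℝ) : ℂ)) *
              ((starRingEnd ℂ (v j)) * ∑ i, (A i j : ℂ) * ((1 / R i : ℝ) : ℂ) * u i) := by
              ring
          _ = (starRingEnd ℂ (v j)) * ∑ i, (A i j : ℂ) * ((1 / R i : ℝ) : ℂ) * u i := by
              rw [hcancel, one_mul]
          _ = ∑ i, (starRingEnd ℂ (v j)) * ((A i j : ℂ) * ((1 / R i : ℝ) : ℂ) * u i) :=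
              Finset.mul_sum _ _ _
      simp only [step1]
      rw [Finset.sum_comm (s := Finset.univ) (t := Finset.univ)
        (f := fun j i => (starRingEnd ℂ (v j)) * ((A i j : ℂ) * ((1 / R i : ℝ) : ℂ) * u i))]
      rw [hNum]
      push_cast
      refine Finset.sum_congr rfl fun i _ => ?_
      have hsum : ∑ j, (starRingEnd ℂ (v j)) * ((A i j : ℂ) * (1 / (R i : ℂ)) * u i)
          = (1 / (R i : ℂ)) * u i * ∑ j, (A i j : ℂ) * (starRingEnd ℂ (v j)) := by
        rw [Finset.mul_sum]
        exact Finset.sum_congr rfl fun j _ => by ring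
      have hconj : ∑ j, (A i j : ℂ) * (starRingEnd ℂ (v j)) = starRingEnd ℂ (u i) := by
        rw [hu]
        simp only [map_sum, map_mul, Complex.conj_ofReal]
      rw [hsum, hconj, mul_assoc, Complex.mul_conj]
    rw [← hL, h2, hRs]
  have hDenpos : 0 < Den := by
    obtain ⟨j0, hj0⟩ : ∃ j, v j ≠ 0 := by
      by_contra hc; push_neg at hc; exact hv (funext hc)
    refine Finset.sum_pos' (fun j _ => mul_nonneg (le_trans zero_le_one (hs1 j))
      (Complex.normSq_nonneg _)) ⟨j0, Finset.mem_univ _, ?_⟩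
    have h1 := Complex.normSq_pos.mpr hj0
    nlinarith [hs1 j0]
  have hNumnonneg : 0 ≤ Num :=
    Finset.sum_nonneg fun i _ => mul_nonneg (by positivity) (Complex.normSq_nonneg _)
  -- Cauchy-Schwarz bound on each term of Num
  have hterm : ∀ i, (1 / R i) * Complex.normSq (u i)
      ≤ ∑ j, if A i j ≠ 0 then Complex.normSq (v j) else 0 := by
    intro i
    set T : ℝ := ∑ j, if A i j ≠ 0 then Complex.normSq (v j) else 0 with hT
    have hTnn : 0 ≤ T := Finset.sum_nonneg fun j _ => by
      split <;> simp [Complex.normSq_nonneg]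
    have hue : u i = ∑ j, (A i j : ℂ) * (if A i j ≠ 0 then v j else 0) := by
      rw [hu]
      refine Finset.sum_congr rfl fun j _ => ?_
      by_cases hj : A i j = 0 <;> simp [hj]
    have hub : ‖u i‖
        ≤ ∑ j, |A i j| * ‖(if A i j ≠ 0 then v j else 0)‖ := by
      rw [hue]
      refine le_trans (norm_sum_le _ _) (le_of_eq ?_)
      refine Finset.sum_congr rfl fun j _ => ?_
      rw [norm_mul, Complex.norm_real, Real.norm_eq_abs]
    have hcs : (∑ j, |A i j| * ‖(if A i j ≠ 0 then v j else 0)‖) ^ 2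
        ≤ R i * T := by
      refine le_trans (Finset.sum_mul_sq_le_sq_mul_sq _ _ _) (le_of_eq ?_)
      congr 1
      · rw [hR]
        exact Finset.sum_congr rfl fun j _ => sq_abs _
      · rw [hT]
        refine Finset.sum_congr rfl fun j _ => ?_
        by_cases hj : A i j = 0 <;> simp [hj, Complex.sq_norm]
    have hnsq : Complex.normSq (u i) ≤ R i * T := by
      rw [← Complex.sq_norm]
      refine le_trans ?_ hcs
      have h0 : (0:ℝ) ≤ ‖u i‖ := norm_nonneg _
      nlinarith [hub]
    calc (1 / R i) * Complex.normSq (u i) ≤ (1 / R i) * (R i * T) := by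
          have h1 : (0:ℝ) ≤ 1 / R i := by positivity
          exact mul_le_mul_of_nonneg_left hnsq h1
      _ = T := by
          rw [one_div, inv_mul_cancel_left₀ (ne_of_gt (hRpos i))]
  have hNumDen : Num ≤ Den := by
    calc Num ≤ ∑ i, ∑ j, (if A i j ≠ 0 then Complex.normSq (v j) else 0) :=
          Finset.sum_le_sum fun i _ => hterm i
      _ = ∑ j, ∑ i, (if A i j ≠ 0 then Complex.normSq (v j) else 0) := Finset.sum_comm
      _ = Den := by
          rw [hDen]
          refine Finset.sum_congr rfl fun j _ => ?_
          rw [← Finset.sum_filter, Finset.sum_const, nsmul_eq_mul, hscard j]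
  have habs : ‖μ‖ * Den = Num := by
    have h3 := congrArg (‖·‖) hkey
    rwa [norm_mul, Complex.norm_real, Real.norm_eq_abs, Complex.norm_real, Real.norm_eq_abs, abs_of_pos hDenpos,
      abs_of_nonneg hNumnonneg] at h3
  nlinarith [habs, hNumDen, hDenpos]
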